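/- For the dihedral group I₂(m) realized on ℝ² (or ℂ²) with basic invariants U₁ = p₁²+p₂² and U₂ the real part of (p₁+ip₂)^m (suitably normalized), the one-parameter family of flat coordinates u₁ = U₁, u₂ = U₂ + c·U₁^{m/2} yields, for B₂ (m=4), the vector potential A¹ = -(2c/3 + 1/2)u₁³ + u₁u₂, A² = -(c²/3 + c/2 + 1)u₁⁴ + (1/2)u₂², which satisfies the oriented associativity equations with unit ∂/∂u₂ and homogeneity E(A^i) = (1+w_i)A^i for E = (1/4)(2u₁∂₁ + 4u₂∂₂) with w₁ = 1/2, w₂ = 1. -/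

import Mathlib

open scoped BigOperators

/-- Partial derivative in the `i`-th coordinate direction on `ℂⁿ`. -/
noncomputable def pd {n : ℕ} (i : Fin n) (f : (Fin n → ℂ) → ℂ) (p : Fin n → ℂ) : ℂ :=
  fderiv ℂ f p (Pi.single i 1)

/-- Second partial derivative `∂_i ∂_j f`. -/
noncomputable def sd {n : ℕ} (i j : Fin n) (f : (Fin n → ℂ) → ℂ) (p : Fin n → ℂ) : ℂ :=
  pd i (pd j f) p

/-- The one-parameter family (parameter `c`) of vector potentials for the dihedral group
`B₂ = I₂(4)` in the flat coordinates `u₁ = U₁ = p₁²+p₂²`, `u₂ = U₂ + cU₁²`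
(`U₂ = p₁⁴+p₂⁴`):  `A¹ = -(2c/3 + 1/2)u₁³ + u₁u₂`, `A² = -(c²/3 + c/2 + 1)u₁⁴ + ½u₂²`. -/
noncomputable def AB2 (c : ℂ) : Fin 2 → (Fin 2 → ℂ) → ℂ :=
  ![fun p => -(2*c/3 + 1/2) * (p 0)^3 + p 0 * p 1,
    fun p => -(c^2/3 + c/2 + 1) * (p 0)^4 + (1/2) * (p 1)^2]

/-- Structure constants `cⁱ_{jk} = ∂_j∂_k A^i` of the `B₂` family. -/
noncomputable def cB2 (c : ℂ) (i j k : Fin 2) (p : Fin 2 → ℂ) : ℂ := sd j k (AB2 c i) p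

lemma pd_of_hasFDerivAt {f : (Fin 2 → ℂ) → ℂ} {f' : (Fin 2 → ℂ) →L[ℂ] ℂ} {p} (i : Fin 2)
    (h : HasFDerivAt f f' p) : pd i f p = f' (Pi.single i 1) := by
  rw [pd, h.fderiv]

lemma hco (j : Fin 2) (p : Fin 2 → ℂ) :
    HasFDerivAt (fun q : Fin 2 → ℂ => q j)
      (ContinuousLinearMap.proj (R := ℂ) (φ := fun _ : Fin 2 => ℂ) j) p :=
  (ContinuousLinearMap.proj (R := ℂ) (φ := fun _ : Fin 2 => ℂ) j).hasFDerivAt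

lemma hpow (j : Fin 2) (n : ℕ) (p : Fin 2 → ℂ) :
    HasFDerivAt (fun q : Fin 2 → ℂ => q j ^ n)
      ((n * p j ^ (n-1)) • ContinuousLinearMap.proj (R := ℂ) (φ := fun _ : Fin 2 => ℂ) j) p :=
  (hasDerivAt_pow n (p j)).comp_hasFDerivAt p (hco j p)

lemma pdA00 (c : ℂ) : pd 0 (AB2 c 0) =
    fun p => 3 * (-(2*c/3 + 1/2)) * (p 0)^2 + p 1 := by
  funext p
  rw [show AB2 c 0 = fun p => -(2*c/3 + 1/2) * (p 0)^3 + p 0 * p 1 from rfl,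
    pd_of_hasFDerivAt (f := fun p => -(2*c/3 + 1/2) * (p 0)^3 + p 0 * p 1) 0 (((hpow 0 3 p).const_mul (-(2*c/3 + 1/2))).add ((hco 0 p).mul (hco 1 p)))]
  simp [Pi.single_apply]
  ring

lemma pdA01 (c : ℂ) : pd 1 (AB2 c 0) = fun p => p 0 := by
  funext p
  rw [show AB2 c 0 = fun p => -(2*c/3 + 1/2) * (p 0)^3 + p 0 * p 1 from rfl,
    pd_of_hasFDerivAt (f := fun p => -(2*c/3 + 1/2) * (p 0)^3 + p 0 * p 1) 1 (((hpow 0 3 p).const_mul (-(2*c/3 + 1/2))).add ((hco 0 p).mul (hco 1 p)))]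
  simp [Pi.single_apply]

lemma pdA10 (c : ℂ) : pd 0 (AB2 c 1) =
    fun p => 4 * (-(c^2/3 + c/2 + 1)) * (p 0)^3 := by
  funext p
  rw [show AB2 c 1 = fun p => -(c^2/3 + c/2 + 1) * (p 0)^4 + (1/2) * (p 1)^2 from rfl,
    pd_of_hasFDerivAt (f := fun p => -(c^2/3 + c/2 + 1) * (p 0)^4 + (1/2) * (p 1)^2) 0 (((hpow 0 4 p).const_mul (-(c^2/3 + c/2 + 1))).add
      ((hpow 1 2 p).const_mul (1/2)))]
  simp [Pi.single_apply]
  ring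

lemma pdA11 (c : ℂ) : pd 1 (AB2 c 1) = fun p => p 1 := by
  funext p
  rw [show AB2 c 1 = fun p => -(c^2/3 + c/2 + 1) * (p 0)^4 + (1/2) * (p 1)^2 from rfl,
    pd_of_hasFDerivAt (f := fun p => -(c^2/3 + c/2 + 1) * (p 0)^4 + (1/2) * (p 1)^2) 1 (((hpow 0 4 p).const_mul (-(c^2/3 + c/2 + 1))).add
      ((hpow 1 2 p).const_mul (1/2)))]
  simp [Pi.single_apply]

lemma c000 (c : ℂ) (p : Fin 2 → ℂ) : cB2 c 0 0 0 p = 6 * (-(2*c/3 + 1/2)) * p 0 := by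
  show pd 0 (pd 0 (AB2 c 0)) p = _
  rw [pdA00,
    pd_of_hasFDerivAt (f := fun p => 3 * (-(2*c/3 + 1/2)) * (p 0)^2 + p 1) 0 (((hpow 0 2 p).const_mul (3 * (-(2*c/3 + 1/2)))).add (hco 1 p))]
  simp [Pi.single_apply]
  ring

lemma c001 (c : ℂ) (p : Fin 2 → ℂ) : cB2 c 0 0 1 p = 1 := by
  show pd 0 (pd 1 (AB2 c 0)) p = _
  rw [pdA01, pd_of_hasFDerivAt 0 (hco 0 p)]
  simp [Pi.single_apply]

lemma c010 (c : ℂ) (p : Fin 2 → ℂ) : cB2 c 0 1 0 p = 1 := by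
  show pd 1 (pd 0 (AB2 c 0)) p = _
  rw [pdA00,
    pd_of_hasFDerivAt (f := fun p => 3 * (-(2*c/3 + 1/2)) * (p 0)^2 + p 1) 1 (((hpow 0 2 p).const_mul (3 * (-(2*c/3 + 1/2)))).add (hco 1 p))]
  simp [Pi.single_apply]

lemma c011 (c : ℂ) (p : Fin 2 → ℂ) : cB2 c 0 1 1 p = 0 := by
  show pd 1 (pd 1 (AB2 c 0)) p = _
  rw [pdA01, pd_of_hasFDerivAt 1 (hco 0 p)]
  simp [Pi.single_apply]

lemma c100 (c : ℂ) (p : Fin 2 → ℂ) : cB2 c 1 0 0 p = 12 * (-(c^2/3 + c/2 + 1)) * (p 0)^2 := by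
  show pd 0 (pd 0 (AB2 c 1)) p = _
  rw [pdA10, pd_of_hasFDerivAt 0 ((hpow 0 3 p).const_mul (4 * (-(c^2/3 + c/2 + 1))))]
  simp [Pi.single_apply]
  ring

lemma c101 (c : ℂ) (p : Fin 2 → ℂ) : cB2 c 1 0 1 p = 0 := by
  show pd 0 (pd 1 (AB2 c 1)) p = _
  rw [pdA11, pd_of_hasFDerivAt 0 (hco 1 p)]
  simp [Pi.single_apply]

lemma c110 (c : ℂ) (p : Fin 2 → ℂ) : cB2 c 1 1 0 p = 0 := by
  show pd 1 (pd 0 (AB2 c 1)) p = _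
  rw [pdA10, pd_of_hasFDerivAt 1 ((hpow 0 3 p).const_mul (4 * (-(c^2/3 + c/2 + 1))))]
  simp [Pi.single_apply]

lemma c111 (c : ℂ) (p : Fin 2 → ℂ) : cB2 c 1 1 1 p = 1 := by
  show pd 1 (pd 1 (AB2 c 1)) p = _
  rw [pdA11, pd_of_hasFDerivAt 1 (hco 1 p)]
  simp [Pi.single_apply]

theorem B2_family_potential (c : ℂ) :
    -- oriented associativity
    (∀ (p : Fin 2 → ℂ) (i j k m : Fin 2),
      (∑ l, cB2 c i j l p * cB2 c l k m p) = ∑ l, cB2 c i k l p * cB2 c l j m p) ∧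
    -- e = ∂/∂u₂ is the unit: ∂₂∂_i A^j = δ^j_i
    (∀ (p : Fin 2 → ℂ) (i j : Fin 2),
      cB2 c j 1 i p = if i = j then (1 : ℂ) else 0) ∧
    -- homogeneity E(A^i) = (1+w_i)A^i with E = (1/2)u₁∂₁ + u₂∂₂ and w = (1/2, 1)
    (∀ (p : Fin 2 → ℂ) (i : Fin 2),
      (1/2) * p 0 * pd 0 (AB2 c i) p + p 1 * pd 1 (AB2 c i) p
        = (1 + (![1/2, 1] : Fin 2 → ℂ) i) * AB2 c i p) := by
  refine ⟨?_, ?_, ?_⟩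
  · intro p i j k m
    fin_cases i <;> fin_cases j <;> fin_cases k <;> fin_cases m <;>
      simp [Fin.sum_univ_two, c000, c001, c010, c011, c100, c101, c110, c111]
  · intro p i j
    fin_cases i <;> fin_cases j <;>
      simp [c001, c011, c101, c111, c010, c110]
  · intro p i
    fin_cases i
    · show 1/2 * p 0 * pd 0 (AB2 c 0) p + p 1 * pd 1 (AB2 c 0) p
          = (1 + 1/2) * (-(2*c/3 + 1/2) * (p 0)^3 + p 0 * p 1)
      simp only [pdA00, pdA01]
      ring
    · show 1/2 * p 0 * pd 0 (AB2 c 1) p + p 1 * pd 1 (AB2 c 1) p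
          = (1 + 1) * (-(c^2/3 + c/2 + 1) * (p 0)^4 + (1/2) * (p 1)^2)
      simp only [pdA10, pdA11]
      ring
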